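/- Let M be a matroid on a finite ground set E, let k ≥ 1 be an integer, and let N be the extended k-fold union of M, with rank function rank_N. Then for every S₀ ⊆ E, rank_N(S₀ × [k]) = k · rank_M(S₀), where rank_M is the rank function of M. -/

import Mathlib

/-- The rank of a set `S` in a matroid `M`: the maximum cardinality of an
independent subset of `S`. -/
noncomputable def matroidRank {α : Type*} (M : Matroid α) (S : Set α) : ℕ :=
  sSup {r | ∃ I : Set α, I ⊆ S ∧ M.Indep I ∧ I.ncard = r}


private lemma rank_exists' {α : Type*} (M : Matroid α) (hfin : M.E.Finite) (S : Set α) :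
    ∃ I : Set α, I ⊆ S ∧ M.Indep I ∧ I.ncard = matroidRank M S := by
  have hbdd : BddAbove {r | ∃ I : Set α, I ⊆ S ∧ M.Indep I ∧ I.ncard = r} := by
    refine ⟨M.E.ncard, ?_⟩
    rintro r ⟨I, -, hI, rfl⟩
    exact Set.ncard_le_ncard hI.subset_ground hfin
  have hne : {r | ∃ I : Set α, I ⊆ S ∧ M.Indep I ∧ I.ncard = r}.Nonempty :=
    ⟨0, ∅, Set.empty_subset _, M.empty_indep, Set.ncard_empty _⟩
  exact Nat.sSup_mem hne hbdd

private lemma le_rank' {α : Type*} (M : Matroid α) (hfin : M.E.Finite) (S I : Set α)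
    (hIS : I ⊆ S) (hI : M.Indep I) : I.ncard ≤ matroidRank M S := by
  have hbdd : BddAbove {r | ∃ I : Set α, I ⊆ S ∧ M.Indep I ∧ I.ncard = r} := by
    refine ⟨M.E.ncard, ?_⟩
    rintro r ⟨I, -, hI, rfl⟩
    exact Set.ncard_le_ncard hI.subset_ground hfin
  exact le_csSup hbdd ⟨I, hIS, hI, rfl⟩

private lemma ncard_iUnion_le' {α : Type*} {k : ℕ} (s : Fin k → Set α) :
    (⋃ j, s j).ncard ≤ ∑ j : Fin k, (s j).ncard := by
  classical
  rw [← Set.biUnion_univ]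
  rw [show (Set.univ : Set (Fin k)) = (Finset.univ : Finset (Fin k)) by simp]
  induction (Finset.univ : Finset (Fin k)) using Finset.induction with
  | empty => simp
  | insert a t ha ih =>
    rw [Finset.coe_insert, Set.biUnion_insert, Finset.sum_insert ha]
    exact le_trans (Set.ncard_union_le _ _) (by omega)

private lemma ncard_prod_univ' {α : Type*} {k : ℕ} (I : Set α) :
    (I ×ˢ (Set.univ : Set (Fin k))).ncard = k * I.ncard := by
  rw [← Nat.card_coe_set_eq, Nat.card_congr (Equiv.Set.prod _ _), Nat.card_prod,
    Nat.card_coe_set_eq, Nat.card_coe_set_eq, Set.ncard_univ]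
  simp [Nat.card_eq_fintype_card, mul_comm]

/-- The span (closure) of a set `S` in a matroid `M`: the elements whose addition
does not increase the rank. -/
noncomputable def matroidSpan {α : Type*} (M : Matroid α) (S : Set α) : Set α :=
  {a | matroidRank M (S ∪ {a}) = matroidRank M S}

/-- The independence predicate of the extended `k`-fold union of `M`: a set
`S ⊆ E × [k]` is independent iff it is a union `S₁ ∪ ⋯ ∪ S_k` where each `S_j`
has pairwise distinct first coordinates and the set of first coordinates of `S_j`
is independent in `M`. -/
def ExtendedIndep {α : Type*} (M : Matroid α) (k : ℕ) (S : Set (α × Fin k)) : Prop :=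
  ∃ Ss : Fin k → Set (α × Fin k),
    S = ⋃ j, Ss j ∧
    ∀ j, Set.InjOn Prod.fst (Ss j) ∧ M.Indep (Prod.fst '' Ss j)

/-- The occupancy function `occ_e(S) = k − rank_N(S ∪ ({e} × [k])) + rank_N(S)`,
valued in `ℤ`. -/
noncomputable def occ {α : Type*} {k : ℕ} (N : Matroid (α × Fin k)) (e : α)
    (S : Set (α × Fin k)) : ℤ :=
  (k : ℤ) - matroidRank N (S ∪ ({e} ×ˢ (Set.univ : Set (Fin k)))) + matroidRank N S

/-- `rank_N(S₀ × [k]) = k · rank_M(S₀)` for the extended `k`-fold union `N` of `M`. -/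
theorem rank_prod_eq {α : Type*} (M : Matroid α) (hfin : M.E.Finite)
    (k : ℕ) (hk : 1 ≤ k)
    (N : Matroid (α × Fin k)) (hNE : N.E = M.E ×ˢ (Set.univ : Set (Fin k)))
    (hN : ∀ S : Set (α × Fin k), N.Indep S ↔ ExtendedIndep M k S)
    (S₀ : Set α) (hS₀ : S₀ ⊆ M.E) :
    matroidRank N (S₀ ×ˢ (Set.univ : Set (Fin k))) = k * matroidRank M S₀ := by
  have hNfin : N.E.Finite := hNE ▸ hfin.prod Set.finite_univ
  apply le_antisymm
  · obtain ⟨J, hJS, hJ, hJcard⟩ := rank_exists' N hNfin (S₀ ×ˢ Set.univ)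
    rw [← hJcard]
    obtain ⟨Ss, rfl, hSs⟩ := (hN J).mp hJ
    calc (⋃ j, Ss j).ncard ≤ ∑ j, (Ss j).ncard := ncard_iUnion_le' _
    _ ≤ ∑ _j : Fin k, matroidRank M S₀ := by
        refine Finset.sum_le_sum fun j _ => ?_
        rw [← Set.ncard_image_of_injOn (hSs j).1]
        refine le_rank' M hfin _ _ ?_ (hSs j).2
        rintro x ⟨p, hp, rfl⟩
        exact (hJS (Set.subset_iUnion Ss j hp)).1
    _ = k * matroidRank M S₀ := by simp [mul_comm]
  · obtain ⟨I, hIS, hI, hIcard⟩ := rank_exists' M hfin S₀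
    rw [← hIcard, ← ncard_prod_univ' I]
    refine le_rank' N hNfin _ _ (Set.prod_mono hIS le_rfl) ?_
    rw [hN]
    refine ⟨fun j => I ×ˢ ({j} : Set (Fin k)), ?_, fun j => ⟨?_, ?_⟩⟩
    · ext ⟨a, b⟩; simp [Set.mem_iUnion]
    · rintro ⟨a, b⟩ ⟨ha, hb⟩ ⟨c, d⟩ ⟨hc, hd⟩ h
      simp_all [Prod.ext_iff]
    · have : Prod.fst '' (I ×ˢ ({j} : Set (Fin k))) = I := by ext a; simp
      rwa [this]
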